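/- With L, (·,·), NE_Q as above and l' ∈ L', the generalized Laufer algorithm terminates: define x₀ = 0, and given x_i ∈ L effective, if l' − x_i ∈ NE_Q stop; otherwise choose j(i) with (l' − x_i, E_{j(i)}) < 0 and set x_{i+1} = x_i + E_{j(i)}. Then every x_i satisfies x_i ≤ l_{l'} (the minimal effective cycle with l' − l_{l'} ∈ NE_Q), the algorithm stops after finitely many steps at some x_t, and x_t = l_{l'}. -/
import Mathlib


open Matrix

variable {J : Type*}

/-- The rational bilinear (intersection) form associated with the integral matrix `B`. -/
def bform [Fintype J] (B : Matrix J J ℤ) (x y : J → ℚ) : ℚ :=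
  x ⬝ᵥ (B.map (fun n => (n : ℚ))).mulVec y

/-- `B` is negative definite as a rational quadratic form. -/
def NegDef [Fintype J] (B : Matrix J J ℤ) : Prop :=
  ∀ x : J → ℚ, x ≠ 0 → bform B x x < 0

/-- Membership in the lattice `L` (integral coordinates in the basis `E_j`). -/
def isLat (x : J → ℚ) : Prop := ∀ j, ∃ m : ℤ, x j = (m : ℚ)

/-- Membership in the dual lattice `L' ⊂ L ⊗ ℚ`. -/
def isDual [Fintype J] [DecidableEq J] (B : Matrix J J ℤ) (x : J → ℚ) : Prop :=
  ∀ j, ∃ m : ℤ, bform B x (Pi.single j 1) = (m : ℚ)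

/-- Membership in the anti-nef cone `NE_ℚ = {x : (x,E_j) ≥ 0 ∀ j}`. -/
def inNE [Fintype J] [DecidableEq J] (B : Matrix J J ℤ) (x : J → ℚ) : Prop :=
  ∀ j, 0 ≤ bform B x (Pi.single j 1)

/-- Effective rational cycles: all coordinates nonnegative. -/
def Effective (x : J → ℚ) : Prop := ∀ j, 0 ≤ x j

/-- `χ(x) = -(x, x+K)/2` (Riemann–Roch). -/
def chi [Fintype J] (B : Matrix J J ℤ) (K x : J → ℚ) : ℚ := -(bform B x (x + K)) / 2

lemma bform_sub_left [Fintype J] (B : Matrix J J ℤ) (a b c : J → ℚ) :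
    bform B (a - b) c = bform B a c - bform B b c := by
  simp [bform, sub_dotProduct]

lemma bform_eff_single_nonneg [Fintype J] [DecidableEq J] (B : Matrix J J ℤ)
    (hoff : ∀ i j, i ≠ j → 0 ≤ B i j) (z : J → ℚ) (hz : ∀ k, 0 ≤ z k)
    (j : J) (hzj : z j = 0) : 0 ≤ bform B z (Pi.single j 1) := by
  unfold bform
  rw [mulVec_single]
  refine Finset.sum_nonneg fun k _ => ?_
  rcases eq_or_ne k j with rfl | h
  · simp [hzj]
  · have : (0 : ℚ) ≤ (B k j : ℚ) := by exact_mod_cast hoff k j h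
    have := mul_nonneg (hz k) this
    simpa [Matrix.map_apply] using mul_nonneg (hz k) (mul_nonneg ‹(0:ℚ) ≤ (B k j : ℚ)› zero_le_one)

/-- the generalized Laufer algorithm stays below `l_{l'}`,
terminates, and ends exactly at `l_{l'}`. -/
theorem stmt3 {J : Type*} [Fintype J] [DecidableEq J]
    (B : Matrix J J ℤ)
    (hsym : B.IsSymm)
    (hneg : NegDef B)
    (hoff : ∀ i j, i ≠ j → 0 ≤ B i j)
    (l' : J → ℚ) (hl' : isDual B l')
    -- `lmin` is the unique minimal effective cycle with `l' - lmin ∈ NE_ℚ`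
    (lmin : J → ℚ) (hlat : isLat lmin) (heff : Effective lmin)
    (hne : inNE B (l' - lmin))
    (hmin : ∀ y : J → ℚ, isLat y → Effective y → inNE B (l' - y) → lmin ≤ y)
    -- the computation sequence
    (x : ℕ → (J → ℚ)) (hx0 : x 0 = 0)
    (hstep : ∀ i, ¬ inNE B (l' - x i) →
      ∃ j, bform B (l' - x i) (Pi.single j 1) < 0 ∧ x (i + 1) = x i + Pi.single j 1) :
    (∀ i, (∀ k < i, ¬ inNE B (l' - x k)) → x i ≤ lmin) ∧
    ∃ t, (∀ k < t, ¬ inNE B (l' - x k)) ∧ inNE B (l' - x t) ∧ x t = lmin := by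
  -- main induction
  have main : ∀ i, (∀ k < i, ¬ inNE B (l' - x k)) →
      isLat (x i) ∧ Effective (x i) ∧ x i ≤ lmin ∧ (∑ j, x i j) = i := by
    intro i
    induction i with
    | zero =>
      intro _
      refine ⟨fun j => ⟨0, by simp [hx0]⟩, fun j => by simp [hx0], fun j => by
        simpa [hx0] using heff j, by simp [hx0]⟩
    | succ i ih =>
      intro h
      obtain ⟨hLat, hEff, hle, hsum⟩ := ih (fun k hk => h k (hk.trans (Nat.lt_succ_self i)))
      have hni : ¬ inNE B (l' - x i) := h i (Nat.lt_succ_self i)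
      obtain ⟨j, hjlt, hjstep⟩ := hstep i hni
      -- strict inequality at coordinate j
      have hstrict : x i j < lmin j := by
        rcases lt_or_eq_of_le (hle j) with h' | h'
        · exact h'
        · exfalso
          have hz : ∀ k, 0 ≤ (lmin - x i) k := fun k => by
            simpa using sub_nonneg.mpr (hle k)
          have hzj : (lmin - x i) j = 0 := by simp [h']
          have h1 : 0 ≤ bform B (lmin - x i) (Pi.single j 1) :=
            bform_eff_single_nonneg B hoff _ hz j hzj
          have h2 : bform B (l' - x i) (Pi.single j 1)
              = bform B (l' - lmin) (Pi.single j 1) + bform B (lmin - x i) (Pi.single j 1) := by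
            rw [bform_sub_left, bform_sub_left, bform_sub_left]; ring
          have := add_nonneg (hne j) h1
          rw [← h2] at this
          exact absurd hjlt (not_lt.mpr this)
      -- integer gap
      obtain ⟨m, hm⟩ := hLat j
      obtain ⟨n, hn⟩ := hlat j
      have hmn : m < n := by
        have : (m : ℚ) < n := by rw [← hm, ← hn]; exact hstrict
        exact_mod_cast this
      have hgap : x i j + 1 ≤ lmin j := by
        rw [hm, hn]
        have : (m : ℚ) + 1 ≤ n := by exact_mod_cast hmn
        exact this
      refine ⟨?_, ?_, ?_, ?_⟩
      · intro k
        obtain ⟨m', hm'⟩ := hLat k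
        rcases eq_or_ne k j with rfl | hk
        · exact ⟨m' + 1, by simp [hjstep, hm']⟩
        · exact ⟨m', by simp [hjstep, Pi.single_eq_of_ne hk, hm']⟩
      · intro k
        rcases eq_or_ne k j with rfl | hk
        · simp only [hjstep, Pi.add_apply, Pi.single_eq_same]
          linarith [hEff k]
        · simpa [hjstep, Pi.single_eq_of_ne hk] using hEff k
      · intro k
        rcases eq_or_ne k j with rfl | hk
        · simpa [hjstep] using hgap
        · simpa [hjstep, Pi.single_eq_of_ne hk] using hle k
      · rw [hjstep]
        simp only [Pi.add_apply]
        rw [Finset.sum_add_distrib, hsum]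
        simp [Finset.sum_pi_single']
  -- termination
  have hterm : ∃ t, inNE B (l' - x t) := by
    by_contra hc
    push_neg at hc
    set N : ℕ := ⌈∑ j, lmin j⌉₊ + 1 with hN
    obtain ⟨_, _, hle, hsum⟩ := main N (fun k _ => hc k)
    have h1 : (N : ℚ) ≤ ∑ j, lmin j := by
      rw [← hsum]; exact Finset.sum_le_sum fun j _ => hle j
    have h2 : ∑ j, lmin j ≤ (⌈∑ j, lmin j⌉₊ : ℚ) := Nat.le_ceil _
    have : (N : ℚ) ≤ (⌈∑ j, lmin j⌉₊ : ℚ) := h1.trans h2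
    rw [hN] at this
    push_cast at this
    linarith
  classical
  set t := Nat.find hterm with htdef
  have ht : inNE B (l' - x t) := Nat.find_spec hterm
  have hprev : ∀ k < t, ¬ inNE B (l' - x k) := fun k hk => Nat.find_min hterm hk
  obtain ⟨hLat, hEff, hle, _⟩ := main t hprev
  have hge := hmin (x t) hLat hEff ht
  exact ⟨fun i hi => (main i hi).2.2.1, t, hprev, ht, le_antisymm hle hge⟩
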